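/- Let 0 < α < 1, u ∈ Δⁿ, w ∈ relint(Δⁿ), and β ∈ relint(αΔⁿ) (i.e., 0 < βᵢ < α for all i and Σᵢ βᵢ = α). Let p be the relative entropy projection of w onto C(β) = {x ∈ Δⁿ : x ≥ β}. Then D(u‖w) − D(u‖p) ≥ ln(1−α). -/

import Mathlib

open Finset Real
open scoped Classical

lemma phi_conv (w x y : ℝ) (hw : 0 < w) (hx : 0 < x) (hy : 0 < y) :
    x * Real.log (x / w) + (y - x) * (Real.log (x / w) + 1) ≤ y * Real.log (y / w) := by
  have h1 : Real.log (x / y) ≤ x / y - 1 := Real.log_le_sub_one_of_pos (by positivity)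
  have h2 : y - x ≤ y * (Real.log y - Real.log x) := by
    rw [Real.log_div hx.ne' hy.ne'] at h1
    have := mul_le_mul_of_nonneg_left h1 hy.le
    have hyx : y * (x / y) = x := by field_simp
    nlinarith
  rw [Real.log_div hx.ne' hw.ne', Real.log_div hy.ne' hw.ne']
  nlinarith

lemma key_lb (n : ℕ) (α : ℝ) (hα : 0 < α) (hα1 : α < 1)
    (w β p : Fin n → ℝ)
    (hw : ∀ i, 0 < w i) (hw1 : ∑ i, w i = 1)
    (hβ : ∀ i, 0 < β i) (hβ1 : ∑ i, β i = α)
    (hpβ : ∀ i, β i ≤ p i) (hp1 : ∑ i, p i = 1)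
    (hmin : ∀ x : Fin n → ℝ, (∀ i, β i ≤ x i) → (∀ i, 0 ≤ x i) → ∑ i, x i = 1 →
      ∑ i, p i * Real.log (p i / w i) ≤ ∑ i, x i * Real.log (x i / w i)) :
    ∀ k, (1 - α) * w k ≤ p k := by
  have hp0 : ∀ i, 0 < p i := fun i => lt_of_lt_of_le (hβ i) (hpβ i)
  have hne : (Finset.univ : Finset (Fin n)).Nonempty := by
    by_contra h
    rw [Finset.not_nonempty_iff_eq_empty] at h
    rw [h, Finset.sum_empty] at hw1
    norm_num at hw1
  -- there exists j with β j < p j and (1-α) * w j < p j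
  have hT : ∃ j, β j < p j ∧ (1 - α) * w j < p j := by
    by_contra hT
    push_neg at hT
    have hlt : ∀ i ∈ Finset.univ, p i < β i + (1 - α) * w i := by
      intro i _
      rcases eq_or_lt_of_le (hpβ i) with h | h
      · have := mul_pos (by linarith : (0:ℝ) < 1 - α) (hw i)
        linarith
      · have := hT i h
        have := hβ i
        linarith
    have := Finset.sum_lt_sum_of_nonempty hne hlt
    rw [hp1, Finset.sum_add_distrib, hβ1, ← Finset.mul_sum, hw1] at this
    linarith
  intro k
  by_contra hk
  push_neg at hk
  obtain ⟨j, hjβ, hjw⟩ := hT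
  have hjk : j ≠ k := by rintro rfl; linarith
  have hnum : 0 < p j * w k - p k * w j := by
    nlinarith [mul_pos (hw j) (hw k),
      mul_lt_mul_of_pos_right hjw (hw k),
      mul_lt_mul_of_pos_right hk (hw j)]
  have hden : (0:ℝ) < 2 * (w j + w k) := by
    have := hw j; have := hw k; linarith
  set ε : ℝ := min (p j - β j) ((p j * w k - p k * w j) / (2 * (w j + w k))) with hεdef
  have hε : 0 < ε := lt_min (by linarith) (div_pos hnum hden)
  have hεβ : ε ≤ p j - β j := min_le_left _ _
  have hεd : ε * (2 * (w j + w k)) ≤ p j * w k - p k * w j := by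
    have := min_le_right (p j - β j) ((p j * w k - p k * w j) / (2 * (w j + w k)))
    calc ε * (2 * (w j + w k)) ≤ ((p j * w k - p k * w j) / (2 * (w j + w k))) * (2 * (w j + w k)) := by
            exact mul_le_mul_of_nonneg_right this hden.le
      _ = p j * w k - p k * w j := by rw [div_mul_cancel₀ _ hden.ne']
  set x : Fin n → ℝ := fun i => if i = k then p k + ε else if i = j then p j - ε else p i with hxdef
  have hx1 : ∀ i, β i ≤ x i := by
    intro i
    simp only [hxdef]
    split_ifs with h1 h2
    · subst h1; have := hpβ i; linarith
    · subst h2; linarith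
    · exact hpβ i
  have hx0 : ∀ i, 0 ≤ x i := fun i => le_trans (hβ i).le (hx1 i)
  have hxeq : ∀ i, x i = p i + ((if i = k then ε else 0) + (if i = j then -ε else 0)) := by
    intro i
    by_cases h1 : i = k
    · subst h1; simp [hxdef, Ne.symm hjk]
    · by_cases h2 : i = j
      · subst h2; simp [hxdef, h1]; ring
      · simp [hxdef, h1, h2]
  have hxs : ∑ i, x i = 1 := by
    simp only [hxeq]
    rw [Finset.sum_add_distrib, Finset.sum_add_distrib, hp1]
    simp [Finset.sum_ite_eq']
  have hmin' := hmin x hx1 hx0 hxs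
  -- split the difference sum
  have hsplit : ∑ i, (x i * Real.log (x i / w i) - p i * Real.log (p i / w i)) =
      ((p k + ε) * Real.log ((p k + ε) / w k) - p k * Real.log (p k / w k)) +
      ((p j - ε) * Real.log ((p j - ε) / w j) - p j * Real.log (p j / w j)) := by
    rw [← Finset.sum_subset (Finset.subset_univ ({k, j} : Finset (Fin n)))]
    · rw [Finset.sum_pair (Ne.symm hjk)]
      simp [hxdef, hjk]
    · intro i _ hi
      simp only [Finset.mem_insert, Finset.mem_singleton, not_or] at hi
      simp [hxdef, hi.1, hi.2]
  have hpj' : 0 < p j - ε := by have := hβ j; linarith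
  have hbk := phi_conv (w k) (p k + ε) (p k) (hw k) (by have := hp0 k; linarith) (hp0 k)
  have hbj := phi_conv (w j) (p j - ε) (p j) (hw j) hpj' (hp0 j)
  have hlog : Real.log ((p k + ε) / w k) < Real.log ((p j - ε) / w j) := by
    apply Real.log_lt_log (div_pos (by linarith [hp0 k]) (hw k))
    rw [div_lt_div_iff₀ (hw k) (hw j)]
    nlinarith
  have hsum : ∑ i, (x i * Real.log (x i / w i) - p i * Real.log (p i / w i)) < 0 := by
    rw [hsplit]
    nlinarith [mul_lt_mul_of_pos_left hlog hε]
  rw [Finset.sum_sub_distrib] at hsum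
  linarith


/-- Corollary 1: relative entropy drop under the projection update. -/
theorem stmt_3 (n : ℕ) (α : ℝ) (hα : 0 < α) (hα1 : α < 1)
    (u w β p : Fin n → ℝ)
    (hu : ∀ i, 0 ≤ u i) (hu1 : ∑ i, u i = 1)
    (hw : ∀ i, 0 < w i) (hw1 : ∑ i, w i = 1)
    (hβ : ∀ i, 0 < β i) (hβα : ∀ i, β i < α) (hβ1 : ∑ i, β i = α)
    (hpC : (∀ i, β i ≤ p i) ∧ (∀ i, 0 ≤ p i) ∧ ∑ i, p i = 1)
    (hmin : ∀ x : Fin n → ℝ, (∀ i, β i ≤ x i) → (∀ i, 0 ≤ x i) → ∑ i, x i = 1 →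
      ∑ i, p i * Real.log (p i / w i) ≤ ∑ i, x i * Real.log (x i / w i)) :
    (∑ i, u i * Real.log (u i / w i)) - (∑ i, u i * Real.log (u i / p i)) ≥
      Real.log (1 - α) := by
  obtain ⟨hpβ, hp0', hp1⟩ := hpC
  have hkey := key_lb n α hα hα1 w β p hw hw1 hβ hβ1 hpβ hp1 hmin
  have hp0 : ∀ i, 0 < p i := fun i => lt_of_lt_of_le (hβ i) (hpβ i)
  have hterm : ∀ i, u i * Real.log (u i / w i) - u i * Real.log (u i / p i) =
      u i * (Real.log (p i) - Real.log (w i)) := by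
    intro i
    rcases eq_or_lt_of_le (hu i) with h | h
    · simp [← h]
    · rw [Real.log_div h.ne' (hw i).ne', Real.log_div h.ne' (hp0 i).ne']
      ring
  rw [← Finset.sum_sub_distrib]
  calc Real.log (1 - α) = ∑ i, u i * Real.log (1 - α) := by
        rw [← Finset.sum_mul, hu1, one_mul]
    _ ≤ ∑ i, u i * (Real.log (p i) - Real.log (w i)) := by
        apply Finset.sum_le_sum
        intro i _
        apply mul_le_mul_of_nonneg_left _ (hu i)
        have h1 : Real.log ((1 - α) * w i) ≤ Real.log (p i) :=
          Real.log_le_log (mul_pos (by linarith) (hw i)) (hkey i)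
        rw [Real.log_mul (by linarith : (1:ℝ) - α ≠ 0) (hw i).ne'] at h1
        linarith
    _ = ∑ i, (u i * Real.log (u i / w i) - u i * Real.log (u i / p i)) := by
        exact Finset.sum_congr rfl (fun i _ => (hterm i).symm)
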